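/- Let 𝒱 = (s₁,s₂)×(t₁,t₂) ⊆ ℝ² ≅ ℂ, let g be holomorphic on 𝒱 with g'(z) ≠ 0 for all z ∈ 𝒱, and set ω = log|g'| and σ = −|g|²/2. Let 𝔮 ∈ ℝ and let v : 𝒱 → ℝ be a C² function satisfying v_xx + v_yy + 2e^{2ω} = 0 and v_zz − 2ω_z v_z = 𝔮 on 𝒱, where v_z = (v_x − iv_y)/2, v_zz = (v_xx − v_yy − 2iv_xy)/4 and ω_z = (ω_x − iω_y)/2. Fix x₀ ∈ (s₁,s₂) and suppose there exist α, β ∈ ℝ with α ≠ 0 such that 2ω_x(x₀,y) = −α·e^{−ω(x₀,y)} − β·e^{ω(x₀,y)} for all y ∈ (t₁,t₂). Then, setting b = 4𝔮/α and c = 1 − 2𝔮β/α, there exist a, d₁, d₂ ∈ ℝ such that, with L = d₁·Re g + d₂·Im g, for all y ∈ (t₁,t₂): v(x₀,y) = a + c·σ(x₀,y) + L(x₀,y) and v_x(x₀,y) = b·e^{ω(x₀,y)} + c·σ_x(x₀,y) + L_x(x₀,y); that is, the curve y ↦ g(x₀+iy) is a capillary curve of v. -/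

import Mathlib

open Set


/-- Shift a derivative-at-0 statement along a path to a derivative-at-y statement. -/
lemma hasDerivAt_of_shift {E : Type*} [NormedAddCommGroup E] [NormedSpace ℝ E]
    {φ : ℝ → E} {d : E} {y : ℝ}
    (h : HasDerivAt (fun t : ℝ => φ (y + t)) d 0) : HasDerivAt φ d y := by
  have h0 : HasDerivAt (fun t : ℝ => φ (y + t)) d (y - y) := by rw [sub_self]; exact h
  have h3 := h0.comp_sub_const y y
  have : (fun y' : ℝ => φ (y + (y' - y))) = φ := by funext y'; congr 1; ring
  rwa [this] at h3

lemma line_shift {E : Type*} [NormedAddCommGroup E] [NormedSpace ℝ E]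
    {f : ℂ → E} {d : E} (x₀ y : ℝ)
    (h : HasDerivAt (fun t : ℝ => f (((x₀ : ℂ) + (y : ℂ) * Complex.I) + (t : ℂ) * Complex.I)) d 0) :
    HasDerivAt (fun y' : ℝ => f ((x₀ : ℂ) + (y' : ℂ) * Complex.I)) d y := by
  apply hasDerivAt_of_shift
  have : (fun t : ℝ => f ((x₀ : ℂ) + ((y + t : ℝ) : ℂ) * Complex.I))
      = (fun t : ℝ => f (((x₀ : ℂ) + (y : ℂ) * Complex.I) + (t : ℂ) * Complex.I)) := by
    funext t; congr 1; push_cast; ring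
  exact this ▸ h

/-- Chain rule along a real path for a complex-differentiable function. -/
lemma hasDerivAt_comp_path {f : ℂ → ℂ} {p : ℝ → ℂ} {a p' : ℂ} {t₀ : ℝ}
    (hf : HasDerivAt f a (p t₀)) (hp : HasDerivAt p p' t₀) :
    HasDerivAt (fun t => f (p t)) (p' * a) t₀ := by
  have := (hf.hasFDerivAt.restrictScalars ℝ).comp_hasDerivAt t₀ hp
  simpa [Function.comp_def, smul_eq_mul, mul_comm] using this

lemma hasDerivAt_line (x₀ y : ℝ) :
    HasDerivAt (fun y' : ℝ => (x₀ : ℂ) + (y' : ℂ) * Complex.I) Complex.I y := by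
  simpa using (Complex.ofRealCLM.hasDerivAt.mul_const Complex.I).const_add (x₀ : ℂ)

lemma hasDerivAt_ofReal_comp {f : ℝ → ℝ} {d y : ℝ} (h : HasDerivAt f d y) :
    HasDerivAt (fun t => (f t : ℂ)) ((d : ℂ)) y := by
  simpa [Function.comp_def] using Complex.ofRealCLM.hasFDerivAt.comp_hasDerivAt y h

lemma hasDerivAt_re_comp {f : ℝ → ℂ} {d : ℂ} {y : ℝ} (h : HasDerivAt f d y) :
    HasDerivAt (fun t => (f t).re) d.re y := by
  simpa [Function.comp_def] using Complex.reCLM.hasFDerivAt.comp_hasDerivAt y h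

lemma hasDerivAt_im_comp {f : ℝ → ℂ} {d : ℂ} {y : ℝ} (h : HasDerivAt f d y) :
    HasDerivAt (fun t => (f t).im) d.im y := by
  simpa [Function.comp_def] using Complex.imCLM.hasFDerivAt.comp_hasDerivAt y h

/-- Derivative of `log |F|` along a real path. -/
lemma log_abs_deriv {F : ℝ → ℂ} {A w : ℂ} (hF : HasDerivAt F A 0) (h0 : F 0 = w) (hw : w ≠ 0) :
    HasDerivAt (fun t => Real.log (‖F t‖))
      (((starRingEnd ℂ) w * A).re / Complex.normSq w) 0 := by
  have hre := hasDerivAt_re_comp hF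
  have him := hasDerivAt_im_comp hF
  have hsq : HasDerivAt (fun t => (F t).re * (F t).re + (F t).im * (F t).im)
      ((A.re * (F 0).re + (F 0).re * A.re) + (A.im * (F 0).im + (F 0).im * A.im)) 0 :=
    (hre.mul hre).add (him.mul him)
  have hne : (F 0).re * (F 0).re + (F 0).im * (F 0).im ≠ 0 := by
    rw [h0]
    have := Complex.normSq_pos.mpr hw
    rw [Complex.normSq_apply] at this; linarith
  have hlog := (hsq.log hne).div_const 2
  have heq : (fun t => Real.log (‖F t‖))
      = fun t => Real.log ((F t).re * (F t).re + (F t).im * (F t).im) / 2 := by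
    funext t
    rw [Complex.norm_def, Real.log_sqrt (Complex.normSq_nonneg _), Complex.normSq_apply]
  rw [heq]
  refine hlog.congr_deriv ?_
  rw [h0]
  simp [Complex.mul_re, Complex.normSq_apply]
  ring

open Complex

/-- The key algebraic identity showing the derivative of `η` vanishes. -/
lemma algebra_step (vx vy vxy vyy ox oy q al be C B w cw P E : ℂ)
    (hw : w ≠ 0) (hal : al ≠ 0)
    (hf1 : vxy - Complex.I * vyy
      = Complex.I * P ^ 2 + 2 * Complex.I * q + Complex.I * (ox - Complex.I * oy) * (vx - Complex.I * vy))
    (hmod : w * cw = P ^ 2) (hEP : E * P = 1)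
    (hcap : 2 * ox = -al * E - be * P)
    (hC : C * al = al - 2 * q * be) (hB : B * al = 4 * q) :
    ((vxy - Complex.I * vyy) * w - (vx - Complex.I * vy) * (Complex.I * (w * (ox - Complex.I * oy)))) / w ^ 2
      + C * (-Complex.I * cw)
      - B * ((-Complex.I * cw * (ox + Complex.I * oy)) * E + cw * (-oy * E)) = 0 := by
  have hIsq : (Complex.I) ^ 2 = -1 := Complex.I_sq
  have hN : ((vxy - Complex.I * vyy) * w - (vx - Complex.I * vy) * (Complex.I * (w * (ox - Complex.I * oy)))
      + (C * (-Complex.I * cw)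
        - B * ((-Complex.I * cw * (ox + Complex.I * oy)) * E + cw * (-oy * E))) * w ^ 2) * al = 0 := by
    linear_combination (w * al) * hf1
      + (-2 * q * Complex.I * al * w * E ^ 2 - Complex.I * al * w) * hmod
      + (-(Complex.I * cw * w ^ 2 * B * be * al) / 2 - 2 * q * Complex.I * al * w * (E * P + 1)) * hEP
      + (B * Complex.I * cw * E * w ^ 2 * al / 2) * hcap
      + (-(Complex.I * cw * w ^ 2)) * hC
      + (-(Complex.I * cw * E ^ 2 * w ^ 2 * al) / 2 - (Complex.I * cw * w ^ 2 * be) / 2) * hB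
      + (B * cw * E * oy * w ^ 2 * al) * hIsq
  have hN0 : (vxy - Complex.I * vyy) * w - (vx - Complex.I * vy) * (Complex.I * (w * (ox - Complex.I * oy)))
      + (C * (-Complex.I * cw)
        - B * ((-Complex.I * cw * (ox + Complex.I * oy)) * E + cw * (-oy * E))) * w ^ 2 = 0 :=
    (mul_eq_zero.mp hN).resolve_right hal
  have hLHS : ((vxy - Complex.I * vyy) * w - (vx - Complex.I * vy) * (Complex.I * (w * (ox - Complex.I * oy)))) / w ^ 2
      + C * (-Complex.I * cw)
      - B * ((-Complex.I * cw * (ox + Complex.I * oy)) * E + cw * (-oy * E))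
      = ((vxy - Complex.I * vyy) * w - (vx - Complex.I * vy) * (Complex.I * (w * (ox - Complex.I * oy)))
      + (C * (-Complex.I * cw)
        - B * ((-Complex.I * cw * (ox + Complex.I * oy)) * E + cw * (-oy * E))) * w ^ 2) / w ^ 2 := by
    field_simp
    ring
  rw [hLHS, hN0, zero_div]

/-- Proposition 2.7 (converse direction): if `2ω_x = −α e^{−ω} − β e^{ω}` with `α ≠ 0`
holds along the vertical parameter curve `x = x₀`, then that curve is a capillary
curve of `v`, with `b = 4𝔮/α` and `c = 1 − 2𝔮β/α`. -/
theorem omega_equation_implies_capillary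
    (s₁ s₂ t₁ t₂ : ℝ) (V : Set ℂ)
    (hV : V = {z : ℂ | z.re ∈ Ioo s₁ s₂ ∧ z.im ∈ Ioo t₁ t₂})
    (g g' : ℂ → ℂ)
    (hg : ∀ z ∈ V, HasDerivAt g (g' z) z)
    (hg'ne : ∀ z ∈ V, g' z ≠ 0)
    (ω σ : ℂ → ℝ)
    (hωdef : ∀ z, ω z = Real.log (‖g' z‖))
    (hσdef : ∀ z, σ z = -‖g z‖^2 / 2)
    (ωx ωy : ℂ → ℝ)
    (hωx : ∀ z ∈ V, HasDerivAt (fun t : ℝ => ω (z + t)) (ωx z) 0)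
    (hωy : ∀ z ∈ V, HasDerivAt (fun t : ℝ => ω (z + t * Complex.I)) (ωy z) 0)
    (v : ℂ → ℝ) (hv : ContDiffOn ℝ 2 v V)
    (vx vy vxx vyy vxy : ℂ → ℝ)
    (hvx : ∀ z ∈ V, HasDerivAt (fun t : ℝ => v (z + t)) (vx z) 0)
    (hvy : ∀ z ∈ V, HasDerivAt (fun t : ℝ => v (z + t * Complex.I)) (vy z) 0)
    (hvxx : ∀ z ∈ V, HasDerivAt (fun t : ℝ => vx (z + t)) (vxx z) 0)
    (hvyy : ∀ z ∈ V, HasDerivAt (fun t : ℝ => vy (z + t * Complex.I)) (vyy z) 0)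
    (hvxy : ∀ z ∈ V, HasDerivAt (fun t : ℝ => vx (z + t * Complex.I)) (vxy z) 0)
    (hpde : ∀ z ∈ V, vxx z + vyy z + 2 * Real.exp (2 * ω z) = 0)
    (𝔮 : ℝ)
    (hhopf : ∀ z ∈ V,
      ((vxx z : ℂ) - (vyy z : ℂ) - 2 * Complex.I * (vxy z : ℂ)) / 4
        - 2 * (((ωx z : ℂ) - Complex.I * (ωy z : ℂ)) / 2)
            * (((vx z : ℂ) - Complex.I * (vy z : ℂ)) / 2) = (𝔮 : ℂ))
    (x₀ : ℝ) (hx₀ : x₀ ∈ Ioo s₁ s₂)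
    (α β : ℝ) (hα : α ≠ 0)
    (hcap : ∀ y ∈ Ioo t₁ t₂,
      2 * ωx ((x₀ : ℂ) + (y : ℂ) * Complex.I)
        = -α * Real.exp (-(ω ((x₀ : ℂ) + (y : ℂ) * Complex.I)))
          - β * Real.exp (ω ((x₀ : ℂ) + (y : ℂ) * Complex.I))) :
    ∃ a d₁ d₂ : ℝ, ∀ y ∈ Ioo t₁ t₂,
      (v ((x₀ : ℂ) + (y : ℂ) * Complex.I)
        = a + (1 - 2 * 𝔮 * β / α) * σ ((x₀ : ℂ) + (y : ℂ) * Complex.I)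
          + (d₁ * (g ((x₀ : ℂ) + (y : ℂ) * Complex.I)).re
            + d₂ * (g ((x₀ : ℂ) + (y : ℂ) * Complex.I)).im))
      ∧ (vx ((x₀ : ℂ) + (y : ℂ) * Complex.I)
        = (4 * 𝔮 / α) * Real.exp (ω ((x₀ : ℂ) + (y : ℂ) * Complex.I))
          + (1 - 2 * 𝔮 * β / α)
              * (-((starRingEnd ℂ) (g ((x₀ : ℂ) + (y : ℂ) * Complex.I))
                  * g' ((x₀ : ℂ) + (y : ℂ) * Complex.I)).re)
          + (d₁ * (g' ((x₀ : ℂ) + (y : ℂ) * Complex.I)).re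
            + d₂ * (g' ((x₀ : ℂ) + (y : ℂ) * Complex.I)).im)) := by
  classical
  by_cases hne : ∃ y', y' ∈ Ioo t₁ t₂
  swap
  · exact ⟨0, 0, 0, fun y hy => absurd ⟨y, hy⟩ hne⟩
  obtain ⟨y₀, hy₀⟩ := hne
  have hVopen : IsOpen V := by
    rw [hV]
    exact (isOpen_Ioo.preimage Complex.continuous_re).inter
      (isOpen_Ioo.preimage Complex.continuous_im)
  have hzmem : ∀ y ∈ Ioo t₁ t₂, ((x₀ : ℂ) + (y : ℂ) * Complex.I) ∈ V := by
    intro y hy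
    rw [hV]
    refine ⟨?_, ?_⟩ <;>
      simp [Complex.add_re, Complex.add_im, Complex.mul_re, Complex.mul_im, hx₀, hy]
  -- second derivative of g
  have hgderiv : ∀ z ∈ V, deriv g z = g' z := fun z hz => (hg z hz).deriv
  have hgd : DifferentiableOn ℂ g V := fun z hz =>
    ((hg z hz).differentiableAt).differentiableWithinAt
  have hga : AnalyticOnNhd ℂ (deriv g) V := (hgd.analyticOnNhd hVopen).deriv
  set g'' : ℂ → ℂ := deriv (deriv g) with hg''def
  have hg'' : ∀ z ∈ V, HasDerivAt g' (g'' z) z := by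
    intro z hz
    have h1 : HasDerivAt (deriv g) (g'' z) z := ((hga z hz).differentiableAt).hasDerivAt
    apply h1.congr_of_eventuallyEq
    filter_upwards [hVopen.mem_nhds hz] with u hu
    exact (hgderiv u hu).symm
  -- directional derivatives of g' at points of V
  have hFx : ∀ z ∈ V, HasDerivAt (fun t : ℝ => g' (z + (t : ℂ))) (g'' z) 0 := by
    intro z hz
    have hp : HasDerivAt (fun t : ℝ => z + (t : ℂ)) 1 0 := by
      simpa using (Complex.ofRealCLM.hasDerivAt (x := (0:ℝ))).const_add z
    have hf : HasDerivAt g' (g'' z) ((fun t : ℝ => z + (t : ℂ)) 0) := by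
      simpa using hg'' z hz
    simpa using hasDerivAt_comp_path (p := fun t : ℝ => z + (t : ℂ)) hf hp
  have hFy : ∀ z ∈ V, HasDerivAt (fun t : ℝ => g' (z + (t : ℂ) * Complex.I))
      (Complex.I * g'' z) 0 := by
    intro z hz
    have hp : HasDerivAt (fun t : ℝ => z + (t : ℂ) * Complex.I) Complex.I 0 := by
      simpa using (Complex.ofRealCLM.hasDerivAt (x := (0:ℝ)).mul_const Complex.I).const_add z
    have hf : HasDerivAt g' (g'' z) ((fun t : ℝ => z + (t : ℂ) * Complex.I) 0) := by
      simpa using hg'' z hz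
    simpa using hasDerivAt_comp_path (p := fun t : ℝ => z + (t : ℂ) * Complex.I) hf hp
  -- formulas for ωx, ωy
  have hωx_formula : ∀ z ∈ V, ωx z
      = ((starRingEnd ℂ) (g' z) * g'' z).re / Complex.normSq (g' z) := by
    intro z hz
    have hlog := log_abs_deriv (hFx z hz) (by norm_num) (hg'ne z hz)
    have heq : (fun t : ℝ => ω (z + (t : ℂ))) =
        fun t : ℝ => Real.log (‖g' (z + (t : ℂ))‖) := funext fun t => hωdef _
    refine (hωx z hz).unique ?_
    rw [heq]
    exact hlog
  have hωy_formula : ∀ z ∈ V, ωy z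
      = ((starRingEnd ℂ) (g' z) * (Complex.I * g'' z)).re / Complex.normSq (g' z) := by
    intro z hz
    have hlog := log_abs_deriv (hFy z hz) (by norm_num) (hg'ne z hz)
    have heq : (fun t : ℝ => ω (z + (t : ℂ) * Complex.I)) =
        fun t : ℝ => Real.log (‖g' (z + (t : ℂ) * Complex.I)‖) :=
      funext fun t => hωdef _
    refine (hωy z hz).unique ?_
    rw [heq]
    exact hlog
  -- the key relation g'' = g' * (ωx - I ωy)
  have hkey : ∀ z ∈ V, g'' z = g' z * ((ωx z : ℂ) - Complex.I * (ωy z : ℂ)) := by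
    intro z hz
    have hn : Complex.normSq (g' z) ≠ 0 := fun h => hg'ne z hz (Complex.normSq_eq_zero.mp h)
    have hnr : (g' z).re * (g' z).re + (g' z).im * (g' z).im ≠ 0 := by
      rwa [← Complex.normSq_apply]
    have h1 := hωx_formula z hz
    have h2 := hωy_formula z hz
    have h1' : ωx z * ((g' z).re * (g' z).re + (g' z).im * (g' z).im)
        = (g' z).re * (g'' z).re + (g' z).im * (g'' z).im := by
      rw [h1, ← Complex.normSq_apply, div_mul_cancel₀ _ hn]
      simp [Complex.mul_re, Complex.conj_re, Complex.conj_im]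
    have h2' : ωy z * ((g' z).re * (g' z).re + (g' z).im * (g' z).im)
        = (g' z).im * (g'' z).re - (g' z).re * (g'' z).im := by
      rw [h2, ← Complex.normSq_apply, div_mul_cancel₀ _ hn]
      simp [Complex.mul_re, Complex.mul_im, Complex.conj_re, Complex.conj_im]
      ring
    apply Complex.ext
    · have : (g'' z).re * ((g' z).re * (g' z).re + (g' z).im * (g' z).im)
          = ((g' z).re * ωx z + (g' z).im * ωy z)
              * ((g' z).re * (g' z).re + (g' z).im * (g' z).im) := by
        linear_combination (-(g' z).re) * h1' + (-(g' z).im) * h2'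
      have h3 := mul_right_cancel₀ hnr this
      simp [Complex.mul_re, Complex.mul_im]
      linarith [h3]
    · have : (g'' z).im * ((g' z).re * (g' z).re + (g' z).im * (g' z).im)
          = ((g' z).im * ωx z - (g' z).re * ωy z)
              * ((g' z).re * (g' z).re + (g' z).im * (g' z).im) := by
        linear_combination (-(g' z).im) * h1' + ((g' z).re) * h2'
      have h3 := mul_right_cancel₀ hnr this
      simp [Complex.mul_re, Complex.mul_im]
      linarith [h3]
  -- exponential facts
  have hexpω : ∀ z ∈ V, Real.exp (ω z) = ‖g' z‖ := fun z hz => by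
    rw [hωdef]; exact Real.exp_log (norm_pos_iff.mpr (hg'ne z hz))
  have hmodz : ∀ z ∈ V, g' z * (starRingEnd ℂ) (g' z)
      = ((Real.exp (ω z) : ℝ) : ℂ) ^ 2 := by
    intro z hz
    rw [Complex.mul_conj, hexpω z hz]
    norm_cast
    exact (Complex.sq_norm _).symm
  have hEPr : ∀ z : ℂ, Real.exp (-(ω z)) * Real.exp (ω z) = 1 := fun z => by
    rw [← Real.exp_add]; simp
  -- the function η along the line
  set η : ℝ → ℂ := fun y' =>
    (((vx ((x₀ : ℂ) + (y' : ℂ) * Complex.I) : ℝ) : ℂ)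
        - Complex.I * ((vy ((x₀ : ℂ) + (y' : ℂ) * Complex.I) : ℝ) : ℂ))
      / g' ((x₀ : ℂ) + (y' : ℂ) * Complex.I)
    + ((1 - 2 * 𝔮 * β / α : ℝ) : ℂ) * (starRingEnd ℂ) (g ((x₀ : ℂ) + (y' : ℂ) * Complex.I))
    - ((4 * 𝔮 / α : ℝ) : ℂ) * ((starRingEnd ℂ) (g' ((x₀ : ℂ) + (y' : ℂ) * Complex.I))
        * ((Real.exp (-(ω ((x₀ : ℂ) + (y' : ℂ) * Complex.I))) : ℝ) : ℂ)) with hηdef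
  have hη : ∀ y ∈ Ioo t₁ t₂, HasDerivAt η 0 y := by
    intro y hy
    have hz : ((x₀ : ℂ) + (y : ℂ) * Complex.I) ∈ V := hzmem y hy
    set z : ℂ := (x₀ : ℂ) + (y : ℂ) * Complex.I with hzdef
    have hw : g' z ≠ 0 := hg'ne z hz
    have hpz : HasDerivAt (fun y' : ℝ => (x₀ : ℂ) + (y' : ℂ) * Complex.I) Complex.I y :=
      hasDerivAt_line x₀ y
    have h4 : HasDerivAt (fun y' : ℝ => g ((x₀ : ℂ) + (y' : ℂ) * Complex.I))
        (Complex.I * g' z) y :=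
      hasDerivAt_comp_path (p := fun y' : ℝ => (x₀ : ℂ) + (y' : ℂ) * Complex.I) (hg z hz) hpz
    have h3 : HasDerivAt (fun y' : ℝ => g' ((x₀ : ℂ) + (y' : ℂ) * Complex.I))
        (Complex.I * g'' z) y :=
      hasDerivAt_comp_path (p := fun y' : ℝ => (x₀ : ℂ) + (y' : ℂ) * Complex.I) (hg'' z hz) hpz
    have h1 : HasDerivAt (fun y' : ℝ => vx ((x₀ : ℂ) + (y' : ℂ) * Complex.I)) (vxy z) y :=
      line_shift x₀ y (hvxy z hz)
    have h2 : HasDerivAt (fun y' : ℝ => vy ((x₀ : ℂ) + (y' : ℂ) * Complex.I)) (vyy z) y :=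
      line_shift x₀ y (hvyy z hz)
    have h5 : HasDerivAt (fun y' : ℝ => ω ((x₀ : ℂ) + (y' : ℂ) * Complex.I)) (ωy z) y :=
      line_shift x₀ y (hωy z hz)
    have hnum : HasDerivAt (fun y' : ℝ =>
        ((vx ((x₀ : ℂ) + (y' : ℂ) * Complex.I) : ℝ) : ℂ)
          - Complex.I * ((vy ((x₀ : ℂ) + (y' : ℂ) * Complex.I) : ℝ) : ℂ))
        (((vxy z : ℝ) : ℂ) - Complex.I * ((vyy z : ℝ) : ℂ)) y :=
      (hasDerivAt_ofReal_comp h1).sub ((hasDerivAt_ofReal_comp h2).const_mul Complex.I)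
    have hquot := hnum.div h3 hw
    have hconjg := h4.star
    have hconjg' := h3.star
    simp only [RCLike.star_def] at hconjg hconjg'
    have hexp : HasDerivAt (fun y' : ℝ => Real.exp (-(ω ((x₀ : ℂ) + (y' : ℂ) * Complex.I))))
        (Real.exp (-(ω z)) * -(ωy z)) y := h5.neg.exp
    have hprod := hconjg'.mul (hasDerivAt_ofReal_comp hexp)
    have hD : HasDerivAt η
        (((((vxy z : ℝ) : ℂ) - Complex.I * ((vyy z : ℝ) : ℂ)) * g' z
            - (((vx z : ℝ) : ℂ) - Complex.I * ((vy z : ℝ) : ℂ)) * (Complex.I * g'' z)) / g' z ^ 2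
          + ((1 - 2 * 𝔮 * β / α : ℝ) : ℂ) * ((starRingEnd ℂ) (Complex.I * g' z))
          - ((4 * 𝔮 / α : ℝ) : ℂ) * ((starRingEnd ℂ) (Complex.I * g'' z) * ((Real.exp (-(ω z)) : ℝ) : ℂ)
              + (starRingEnd ℂ) (g' z) * ((Real.exp (-(ω z)) * -(ωy z) : ℝ) : ℂ))) y :=
      (hquot.add (hconjg.const_mul ((1 - 2 * 𝔮 * β / α : ℝ) : ℂ))).sub
        (hprod.const_mul ((4 * 𝔮 / α : ℝ) : ℂ))
    have hαC : (α : ℂ) ≠ 0 := Complex.ofReal_ne_zero.mpr hα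
    have hpC : ((vxx z : ℝ) : ℂ) + ((vyy z : ℝ) : ℂ) + 2 * ((Real.exp (2 * ω z) : ℝ) : ℂ) = 0 := by
      exact_mod_cast congrArg (Complex.ofReal) (hpde z hz)
    have hsqC : ((Real.exp (2 * ω z) : ℝ) : ℂ) = ((Real.exp (ω z) : ℝ) : ℂ) ^ 2 := by
      rw [show (2 : ℝ) * ω z = ω z + ω z by ring, Real.exp_add]
      push_cast; ring
    have hf1 : ((vxy z : ℝ) : ℂ) - Complex.I * ((vyy z : ℝ) : ℂ)
        = Complex.I * ((Real.exp (ω z) : ℝ) : ℂ) ^ 2 + 2 * Complex.I * (𝔮 : ℂ)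
          + Complex.I * (((ωx z : ℝ) : ℂ) - Complex.I * ((ωy z : ℝ) : ℂ))
            * (((vx z : ℝ) : ℂ) - Complex.I * ((vy z : ℝ) : ℂ)) := by
      linear_combination (2 * Complex.I) * (hhopf z hz) - (Complex.I / 2) * hpC
        + Complex.I * hsqC + ((vxy z : ℝ) : ℂ) * Complex.I_sq
    have hEPc : ((Real.exp (-(ω z)) : ℝ) : ℂ) * ((Real.exp (ω z) : ℝ) : ℂ) = 1 := by
      exact_mod_cast hEPr z
    have hcapC : 2 * ((ωx z : ℝ) : ℂ)
        = -(α : ℂ) * ((Real.exp (-(ω z)) : ℝ) : ℂ) - (β : ℂ) * ((Real.exp (ω z) : ℝ) : ℂ) := by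
      exact_mod_cast hcap y hy
    have hCα : ((1 - 2 * 𝔮 * β / α : ℝ) : ℂ) * (α : ℂ) = (α : ℂ) - 2 * (𝔮 : ℂ) * (β : ℂ) := by
      push_cast; field_simp
    have hBα : ((4 * 𝔮 / α : ℝ) : ℂ) * (α : ℂ) = 4 * (𝔮 : ℂ) := by
      push_cast; field_simp
    have halg := algebra_step ((vx z : ℝ) : ℂ) ((vy z : ℝ) : ℂ) ((vxy z : ℝ) : ℂ) ((vyy z : ℝ) : ℂ)
      ((ωx z : ℝ) : ℂ) ((ωy z : ℝ) : ℂ) (𝔮 : ℂ) (α : ℂ) (β : ℂ)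
      ((1 - 2 * 𝔮 * β / α : ℝ) : ℂ) ((4 * 𝔮 / α : ℝ) : ℂ)
      (g' z) ((starRingEnd ℂ) (g' z)) ((Real.exp (ω z) : ℝ) : ℂ) ((Real.exp (-(ω z)) : ℝ) : ℂ)
      hw hαC hf1 (hmodz z hz) hEPc hcapC hCα hBα
    have hstep : ((((vxy z : ℝ) : ℂ) - Complex.I * ((vyy z : ℝ) : ℂ)) * g' z
            - (((vx z : ℝ) : ℂ) - Complex.I * ((vy z : ℝ) : ℂ)) * (Complex.I * g'' z)) / g' z ^ 2
          + ((1 - 2 * 𝔮 * β / α : ℝ) : ℂ) * ((starRingEnd ℂ) (Complex.I * g' z))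
          - ((4 * 𝔮 / α : ℝ) : ℂ) * ((starRingEnd ℂ) (Complex.I * g'' z) * ((Real.exp (-(ω z)) : ℝ) : ℂ)
              + (starRingEnd ℂ) (g' z) * ((Real.exp (-(ω z)) * -(ωy z) : ℝ) : ℂ))
        = ((((vxy z : ℝ) : ℂ) - Complex.I * ((vyy z : ℝ) : ℂ)) * g' z
            - (((vx z : ℝ) : ℂ) - Complex.I * ((vy z : ℝ) : ℂ))
              * (Complex.I * (g' z * (((ωx z : ℝ) : ℂ) - Complex.I * ((ωy z : ℝ) : ℂ))))) / g' z ^ 2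
          + ((1 - 2 * 𝔮 * β / α : ℝ) : ℂ) * (-Complex.I * ((starRingEnd ℂ) (g' z)))
          - ((4 * 𝔮 / α : ℝ) : ℂ)
            * ((-Complex.I * ((starRingEnd ℂ) (g' z))
                * (((ωx z : ℝ) : ℂ) + Complex.I * ((ωy z : ℝ) : ℂ))) * ((Real.exp (-(ω z)) : ℝ) : ℂ)
              + (starRingEnd ℂ) (g' z) * (-((ωy z : ℝ) : ℂ) * ((Real.exp (-(ω z)) : ℝ) : ℂ))) := by
      rw [hkey z hz]
      simp only [map_mul, map_sub, Complex.conj_I, Complex.conj_ofReal]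
      push_cast
      ring
    rw [hstep] at hD
    rw [halg] at hD
    exact hD
  -- η is constant on the interval
  have hηconst : ∀ y ∈ Ioo t₁ t₂, η y = η y₀ := by
    intro y hy
    refine (convex_Ioo t₁ t₂).is_const_of_fderivWithin_eq_zero
      (fun u hu => ((hη u hu).differentiableAt).differentiableWithinAt)
      (fun u hu => ?_) hy hy₀
    rw [((hη u hu).hasFDerivAt.hasFDerivWithinAt).fderivWithin
      (isOpen_Ioo.uniqueDiffWithinAt hu)]
    ext t
    simp
  -- consequence: pointwise identity for vx - I vy
  have hmain : ∀ y ∈ Ioo t₁ t₂,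
      ((vx ((x₀ : ℂ) + (y : ℂ) * Complex.I) : ℝ) : ℂ)
          - Complex.I * ((vy ((x₀ : ℂ) + (y : ℂ) * Complex.I) : ℝ) : ℂ)
        = η y₀ * g' ((x₀ : ℂ) + (y : ℂ) * Complex.I)
          - ((1 - 2 * 𝔮 * β / α : ℝ) : ℂ)
              * (starRingEnd ℂ) (g ((x₀ : ℂ) + (y : ℂ) * Complex.I))
              * g' ((x₀ : ℂ) + (y : ℂ) * Complex.I)
          + ((4 * 𝔮 / α : ℝ) : ℂ)
              * ((starRingEnd ℂ) (g' ((x₀ : ℂ) + (y : ℂ) * Complex.I))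
                * ((Real.exp (-(ω ((x₀ : ℂ) + (y : ℂ) * Complex.I))) : ℝ) : ℂ))
              * g' ((x₀ : ℂ) + (y : ℂ) * Complex.I) := by
    intro y hy
    have hw : g' ((x₀ : ℂ) + (y : ℂ) * Complex.I) ≠ 0 := hg'ne _ (hzmem y hy)
    have h : (((vx ((x₀ : ℂ) + (y : ℂ) * Complex.I) : ℝ) : ℂ)
        - Complex.I * ((vy ((x₀ : ℂ) + (y : ℂ) * Complex.I) : ℝ) : ℂ))
      / g' ((x₀ : ℂ) + (y : ℂ) * Complex.I)
      + ((1 - 2 * 𝔮 * β / α : ℝ) : ℂ)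
          * (starRingEnd ℂ) (g ((x₀ : ℂ) + (y : ℂ) * Complex.I))
      - ((4 * 𝔮 / α : ℝ) : ℂ) * ((starRingEnd ℂ) (g' ((x₀ : ℂ) + (y : ℂ) * Complex.I))
          * ((Real.exp (-(ω ((x₀ : ℂ) + (y : ℂ) * Complex.I))) : ℝ) : ℂ)) = η y₀ :=
      hηconst y hy
    have h' : (((vx ((x₀ : ℂ) + (y : ℂ) * Complex.I) : ℝ) : ℂ)
        - Complex.I * ((vy ((x₀ : ℂ) + (y : ℂ) * Complex.I) : ℝ) : ℂ))
      / g' ((x₀ : ℂ) + (y : ℂ) * Complex.I)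
      = η y₀
        - ((1 - 2 * 𝔮 * β / α : ℝ) : ℂ)
            * (starRingEnd ℂ) (g ((x₀ : ℂ) + (y : ℂ) * Complex.I))
        + ((4 * 𝔮 / α : ℝ) : ℂ) * ((starRingEnd ℂ) (g' ((x₀ : ℂ) + (y : ℂ) * Complex.I))
            * ((Real.exp (-(ω ((x₀ : ℂ) + (y : ℂ) * Complex.I))) : ℝ) : ℂ)) := by
      linear_combination h
    have h2 := (div_eq_iff hw).mp h'
    linear_combination h2
  -- the capillary curve function
  have hFd : ∀ y ∈ Ioo t₁ t₂, HasDerivAt (fun y' : ℝ =>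
      v ((x₀ : ℂ) + (y' : ℂ) * Complex.I)
        - (1 - 2 * 𝔮 * β / α) * σ ((x₀ : ℂ) + (y' : ℂ) * Complex.I)
        - ((η y₀).re * (g ((x₀ : ℂ) + (y' : ℂ) * Complex.I)).re
          + (-(η y₀).im) * (g ((x₀ : ℂ) + (y' : ℂ) * Complex.I)).im)) 0 y := by
    intro y hy
    have hz : ((x₀ : ℂ) + (y : ℂ) * Complex.I) ∈ V := hzmem y hy
    set z : ℂ := (x₀ : ℂ) + (y : ℂ) * Complex.I with hzdef
    have hpz : HasDerivAt (fun y' : ℝ => (x₀ : ℂ) + (y' : ℂ) * Complex.I) Complex.I y :=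
      hasDerivAt_line x₀ y
    have h4 : HasDerivAt (fun y' : ℝ => g ((x₀ : ℂ) + (y' : ℂ) * Complex.I))
        (Complex.I * g' z) y :=
      hasDerivAt_comp_path (p := fun y' : ℝ => (x₀ : ℂ) + (y' : ℂ) * Complex.I) (hg z hz) hpz
    have h6 : HasDerivAt (fun y' : ℝ => v ((x₀ : ℂ) + (y' : ℂ) * Complex.I)) (vy z) y :=
      line_shift x₀ y (hvy z hz)
    have hgre := hasDerivAt_re_comp h4
    have hgim := hasDerivAt_im_comp h4
    have hσfun : (fun y' : ℝ => σ ((x₀ : ℂ) + (y' : ℂ) * Complex.I))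
        = fun y' : ℝ => -((g ((x₀ : ℂ) + (y' : ℂ) * Complex.I)).re
              * (g ((x₀ : ℂ) + (y' : ℂ) * Complex.I)).re
            + (g ((x₀ : ℂ) + (y' : ℂ) * Complex.I)).im
              * (g ((x₀ : ℂ) + (y' : ℂ) * Complex.I)).im) / 2 := by
      funext y'
      rw [hσdef, Complex.sq_norm, Complex.normSq_apply]
    have hσ' : HasDerivAt (fun y' : ℝ => σ ((x₀ : ℂ) + (y' : ℂ) * Complex.I))
        (-(((Complex.I * g' z).re * (g z).re + (g z).re * (Complex.I * g' z).re)
          + ((Complex.I * g' z).im * (g z).im + (g z).im * (Complex.I * g' z).im)) / 2) y := by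
      rw [hσfun]
      exact (((hgre.mul hgre).add (hgim.mul hgim)).neg).div_const 2
    have hL : HasDerivAt (fun y' : ℝ =>
        (η y₀).re * (g ((x₀ : ℂ) + (y' : ℂ) * Complex.I)).re
          + (-(η y₀).im) * (g ((x₀ : ℂ) + (y' : ℂ) * Complex.I)).im)
        ((η y₀).re * (Complex.I * g' z).re + (-(η y₀).im) * (Complex.I * g' z).im) y :=
      (hgre.const_mul ((η y₀).re)).add (hgim.const_mul (-(η y₀).im))
    have hFD := (h6.sub (hσ'.const_mul (1 - 2 * 𝔮 * β / α))).sub hL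
    have him := congrArg Complex.im (hmain y hy)
    simp only [Complex.add_im, Complex.sub_im, Complex.mul_im, Complex.mul_re,
      Complex.I_re, Complex.I_im, Complex.ofReal_re, Complex.ofReal_im,
      Complex.conj_re, Complex.conj_im] at him
    have hder : vy z
        - (1 - 2 * 𝔮 * β / α)
          * (-(((Complex.I * g' z).re * (g z).re + (g z).re * (Complex.I * g' z).re)
            + ((Complex.I * g' z).im * (g z).im + (g z).im * (Complex.I * g' z).im)) / 2)
        - ((η y₀).re * (Complex.I * g' z).re + (-(η y₀).im) * (Complex.I * g' z).im) = 0 := by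
      simp only [Complex.mul_re, Complex.mul_im, Complex.I_re, Complex.I_im,
        Complex.ofReal_re, Complex.ofReal_im]
      linear_combination -him
    rw [hder] at hFD
    exact hFD
  set F : ℝ → ℝ := fun y' =>
      v ((x₀ : ℂ) + (y' : ℂ) * Complex.I)
        - (1 - 2 * 𝔮 * β / α) * σ ((x₀ : ℂ) + (y' : ℂ) * Complex.I)
        - ((η y₀).re * (g ((x₀ : ℂ) + (y' : ℂ) * Complex.I)).re
          + (-(η y₀).im) * (g ((x₀ : ℂ) + (y' : ℂ) * Complex.I)).im) with hFdef
  have hFconst : ∀ y ∈ Ioo t₁ t₂, F y = F y₀ := by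
    intro y hy
    refine (convex_Ioo t₁ t₂).is_const_of_fderivWithin_eq_zero
      (fun u hu => ((hFd u hu).differentiableAt).differentiableWithinAt)
      (fun u hu => ?_) hy hy₀
    rw [((hFd u hu).hasFDerivAt.hasFDerivWithinAt).fderivWithin
      (isOpen_Ioo.uniqueDiffWithinAt hu)]
    ext t
    simp
  refine ⟨F y₀, (η y₀).re, -(η y₀).im, fun y hy => ⟨?_, ?_⟩⟩
  · have h := hFconst y hy
    have hF : F y = v ((x₀ : ℂ) + (y : ℂ) * Complex.I)
        - (1 - 2 * 𝔮 * β / α) * σ ((x₀ : ℂ) + (y : ℂ) * Complex.I)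
        - ((η y₀).re * (g ((x₀ : ℂ) + (y : ℂ) * Complex.I)).re
          + (-(η y₀).im) * (g ((x₀ : ℂ) + (y : ℂ) * Complex.I)).im) := by rw [hFdef]
    rw [hF] at h
    linarith [h]
  · have hz := hzmem y hy
    have hre := congrArg Complex.re (hmain y hy)
    simp only [Complex.add_re, Complex.sub_re, Complex.mul_re, Complex.mul_im,
      Complex.I_re, Complex.I_im, Complex.ofReal_re, Complex.ofReal_im,
      Complex.conj_re, Complex.conj_im, mul_zero, zero_mul, sub_zero, add_zero,
      zero_add, one_mul, mul_one, zero_sub, neg_neg, mul_neg, neg_mul] at hre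
    have hnre : Real.exp (ω ((x₀ : ℂ) + (y : ℂ) * Complex.I))
          * Real.exp (ω ((x₀ : ℂ) + (y : ℂ) * Complex.I))
        = (g' ((x₀ : ℂ) + (y : ℂ) * Complex.I)).re * (g' ((x₀ : ℂ) + (y : ℂ) * Complex.I)).re
          + (g' ((x₀ : ℂ) + (y : ℂ) * Complex.I)).im
            * (g' ((x₀ : ℂ) + (y : ℂ) * Complex.I)).im := by
      rw [hexpω _ hz, ← pow_two, Complex.sq_norm, Complex.normSq_apply]
    have hE1 := hEPr ((x₀ : ℂ) + (y : ℂ) * Complex.I)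
    simp only [Complex.mul_re, Complex.conj_re, Complex.conj_im, neg_mul, neg_neg,
      sub_neg_eq_add]
    linear_combination hre
      + (-(4 * 𝔮 / α) * Real.exp (-(ω ((x₀ : ℂ) + (y : ℂ) * Complex.I)))) * hnre
      + ((4 * 𝔮 / α) * Real.exp (ω ((x₀ : ℂ) + (y : ℂ) * Complex.I))) * hE1
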